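/- Let M be a triangle-free graph on r vertices such that its complement M^c contains K_{n-1} as a subgraph, and let s be an integer with 1 ≤ s < n and (r-n)(s+1) > (n-1)(n-2). Then M^c contains K_n - K_{1,s} (the complete graph on n vertices minus the edges of a star with s leaves). -/

import Mathlib

open SimpleGraph

/-- `H` is contained in `G` as a (not necessarily induced) subgraph. -/
def Contains {α β : Type*} (H : SimpleGraph α) (G : SimpleGraph β) : Prop :=
  ∃ f : α → β, Function.Injective f ∧ ∀ ⦃a b⦄, H.Adj a b → G.Adj (f a) (f b)

/-- The complete graph `K_n` minus the edges of a star `K_{1,s}`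
(center `0`, leaves `1,…,s`). -/
def KnMinusStar (n s : ℕ) : SimpleGraph (Fin n) :=
  (SimpleGraph.fromRel (fun a b : Fin n => a.val = 0 ∧ 1 ≤ b.val ∧ b.val ≤ s))ᶜ

open Finset in
/-- If there is an independent set `S` of size `n-1` and a vertex `v ∉ S` with at most
`s` neighbours in `S`, then the complement contains `K_n - K_{1,s}`. -/
lemma construct_aux {V : Type*} [DecidableEq V] (M : SimpleGraph V)
    [DecidableRel M.Adj] (n s : ℕ)
    (S : Finset V) (hcard : S.card = n - 1)
    (hind : ∀ x ∈ S, ∀ y ∈ S, x ≠ y → ¬ M.Adj x y)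
    (v : V) (hv : v ∉ S)
    (hfew : (S.filter (M.Adj v)).card ≤ s) :
    Contains (KnMinusStar n s) Mᶜ := by
  set T := S.filter (M.Adj v) with hT
  have hTsub : T ⊆ S := filter_subset _ _
  set l : List V := T.toList ++ (S \ T).toList with hl
  have hlen : l.length = n - 1 := by
    rw [hl, List.length_append, length_toList, length_toList, card_sdiff_of_subset hTsub]
    have := card_le_card hTsub
    omega
  have hnodup : l.Nodup := by
    refine List.Nodup.append (nodup_toList _) (nodup_toList _) ?_
    intro x hx hx'
    rw [mem_toList] at hx hx'
    exact (mem_sdiff.mp hx').2 hx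
  have hmemS : ∀ (i : ℕ) (h : i < l.length), l[i] ∈ S := by
    intro i h
    have := List.getElem_mem h
    rcases List.mem_append.mp this with h1 | h2
    · exact hTsub (mem_toList.mp h1)
    · exact (mem_sdiff.mp (mem_toList.mp h2)).1
  have hnotadj : ∀ (i : ℕ) (h : i < l.length), s ≤ i → ¬ M.Adj v l[i] := by
    intro i h hi hadj
    have hTlen : T.toList.length = T.card := length_toList _
    have hTi : T.toList.length ≤ i := by omega
    have hget : l[i] = (S \ T).toList[i - T.toList.length]'(by
        have := h; rw [hl, List.length_append] at this; omega) := by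
      simp only [hl]
      exact List.getElem_append_right hTi
    have hmem : l[i] ∈ S \ T := by
      rw [hget]
      exact mem_toList.mp (List.getElem_mem _)
    exact (mem_sdiff.mp hmem).2 (mem_filter.mpr ⟨(mem_sdiff.mp hmem).1, hadj⟩)
  set F : Fin n → V := fun a => if a.val = 0 then v else l.getD (a.val - 1) v with hF
  have hidx : ∀ a : Fin n, a.val ≠ 0 → a.val - 1 < l.length := by
    intro a ha
    have := a.isLt
    omega
  have hFval : ∀ (a : Fin n) (ha : a.val ≠ 0), F a = l[a.val - 1]'(hidx a ha) := by
    intro a ha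
    rw [hF]
    simp only [if_neg ha]
    exact List.getD_eq_getElem l v (hidx a ha)
  have hF0 : ∀ a : Fin n, a.val = 0 → F a = v := by
    intro a ha
    rw [hF]
    simp [ha]
  have hFS : ∀ (a : Fin n), a.val ≠ 0 → F a ∈ S := by
    intro a ha
    rw [hFval a ha]
    exact hmemS _ (hidx a ha)
  have finj : Function.Injective F := by
    intro a b hab
    by_cases ha : a.val = 0 <;> by_cases hb : b.val = 0
    · exact Fin.ext (by omega)
    · have hvS : v ∈ S := by rw [← hF0 a ha, hab]; exact hFS b hb
      exact absurd hvS hv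
    · have hvS : v ∈ S := by rw [← hF0 b hb, ← hab]; exact hFS a ha
      exact absurd hvS hv
    · rw [hFval a ha, hFval b hb] at hab
      have := (List.Nodup.getElem_inj_iff hnodup).mp hab
      have h2 := a.isLt
      have h3 := b.isLt
      exact Fin.ext (by omega)
  refine ⟨F, finj, ?_⟩
  intro a b hadj
  rw [KnMinusStar, compl_adj, fromRel_adj] at hadj
  obtain ⟨hne, hnr⟩ := hadj
  have hno : ¬((a.val = 0 ∧ 1 ≤ b.val ∧ b.val ≤ s) ∨ (b.val = 0 ∧ 1 ≤ a.val ∧ a.val ≤ s)) :=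
    fun hxy => hnr ⟨hne, hxy⟩
  rw [compl_adj]
  refine ⟨fun h => hne (finj h), ?_⟩
  by_cases ha : a.val = 0 <;> by_cases hb : b.val = 0
  · exact absurd (Fin.ext (ha.trans hb.symm) : a = b) hne
  · rw [hF0 a ha, hFval b hb]
    have hbs : s < b.val := by
      by_contra hc
      push_neg at hc
      exact hno (Or.inl ⟨ha, by omega, hc⟩)
    exact hnotadj _ (hidx b hb) (by omega)
  · rw [hF0 b hb, hFval a ha]
    have has : s < a.val := by
      by_contra hc
      push_neg at hc
      exact hno (Or.inr ⟨hb, by omega, hc⟩)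
    intro hM
    exact hnotadj _ (hidx a ha) (by omega) (M.adj_symm hM)
  · exact hind _ (hFS a ha) _ (hFS b hb) (fun h => hne (finj h))

theorem stmt0 {V : Type*} [Fintype V] (M : SimpleGraph V) (r n s : ℕ)
    (hr : Fintype.card V = r)
    (htf : M.CliqueFree 3)
    (hK : Contains (⊤ : SimpleGraph (Fin (n - 1))) Mᶜ)
    (hs1 : 1 ≤ s) (hsn : s < n)
    (hineq : ((r : ℤ) - n) * (s + 1) > ((n : ℤ) - 1) * ((n : ℤ) - 2)) :
    Contains (KnMinusStar n s) Mᶜ := by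
  classical
  letI : DecidableEq V := Classical.decEq V
  letI : DecidableRel M.Adj := fun a b => Classical.dec _
  have hn2 : 2 ≤ n := by omega
  have hzero : (0:ℤ) ≤ ((n:ℤ) - 1) * ((n:ℤ) - 2) := mul_nonneg (by omega) (by omega)
  have hrn : n < r := by
    have hpos : (0:ℤ) < ((r:ℤ) - n) * ((s:ℤ) + 1) := lt_of_le_of_lt hzero hineq
    have hrpos : (0:ℤ) < (r:ℤ) - n := by
      by_contra hc
      push_neg at hc
      nlinarith
    omega
  have hnat : (n - 1) * (n - 2) < (r - n) * (s + 1) := by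
    have e1 : ((n - 1 : ℕ) : ℤ) = (n:ℤ) - 1 := by omega
    have e2 : ((n - 2 : ℕ) : ℤ) = (n:ℤ) - 2 := by omega
    have e3 : ((r - n : ℕ) : ℤ) = (r:ℤ) - n := by omega
    have h := hineq
    rw [← e1, ← e2, ← e3] at h
    exact_mod_cast h
  by_contra hcon
  have NEG : ∀ S : Finset V, S.card = n - 1 → (∀ x ∈ S, ∀ y ∈ S, x ≠ y → ¬M.Adj x y) →
      ∀ v, v ∉ S → s + 1 ≤ (S.filter (M.Adj v)).card := by
    intro S hc hi v hv
    by_contra h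
    push_neg at h
    exact hcon (construct_aux M n s S hc hi v hv (by omega))
  have tri : ∀ {x y z : V}, M.Adj x y → M.Adj x z → ¬ M.Adj y z := by
    intro x y z h1 h2 h3
    exact htf {x, y, z} (is3Clique_triple_iff.mpr ⟨h1, h2, h3⟩)
  set N : V → Finset V := fun x => Finset.univ.filter (M.Adj x) with hN
  have hNmem : ∀ x y, y ∈ N x ↔ M.Adj x y := by
    intro x y
    simp [hN]
  have hNind : ∀ x, ∀ y ∈ N x, ∀ z ∈ N x, ¬ M.Adj y z := fun x y hy z hz =>
    tri ((hNmem x y).mp hy) ((hNmem x z).mp hz)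
  have hdeg : ∀ x : V, (N x).card ≤ n - 1 := by
    intro x
    by_contra h
    push_neg at h
    obtain ⟨S, hSsub, hScard⟩ := Finset.exists_subset_card_eq (s := N x) (n := n - 1) (le_of_lt h)
    have hne : (N x \ S).Nonempty := by
      rw [← Finset.card_pos, Finset.card_sdiff_of_subset hSsub, hScard]
      omega
    obtain ⟨w, hw⟩ := hne
    have hw1 := (Finset.mem_sdiff.mp hw).1
    have hw2 := (Finset.mem_sdiff.mp hw).2
    have hNe := NEG S hScard (fun a ha b hb _ => hNind x a (hSsub ha) b (hSsub hb)) w hw2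
    have hemp : S.filter (M.Adj w) = ∅ := by
      rw [Finset.filter_eq_empty_iff]
      intro u hu
      exact hNind x w hw1 u (hSsub hu)
    rw [hemp] at hNe
    simp at hNe
  obtain ⟨g, hginj, hg⟩ := hK
  set A : Finset V := Finset.univ.image g with hA
  have hAcard : A.card = n - 1 := by
    rw [hA, Finset.card_image_of_injective _ hginj, Finset.card_univ, Fintype.card_fin]
  have hAind : ∀ x ∈ A, ∀ y ∈ A, x ≠ y → ¬M.Adj x y := by
    intro x hx y hy hxy
    obtain ⟨i, -, rfl⟩ := Finset.mem_image.mp hx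
    obtain ⟨j, -, rfl⟩ := Finset.mem_image.mp hy
    have hij : i ≠ j := fun e => hxy (by rw [e])
    have h := hg (show (⊤ : SimpleGraph (Fin (n - 1))).Adj i j by simpa using hij)
    exact ((compl_adj M _ _).mp h).2
  have dc : ∀ (W B : Finset V), ∑ v ∈ W, (B.filter (M.Adj v)).card
      = ∑ x ∈ B, (W.filter (M.Adj x)).card := by
    intro W B
    simp only [Finset.card_filter]
    rw [Finset.sum_comm]
    refine Finset.sum_congr rfl fun x hx => Finset.sum_congr rfl fun w hw => ?_
    exact if_congr (M.adj_comm w x) rfl rfl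
  have hlow1 : (r - (n - 1)) * (s + 1) ≤ ∑ x ∈ A, (N x).card := by
    have h1 : (Finset.univ \ A).card • (s + 1)
        ≤ ∑ v ∈ Finset.univ \ A, (A.filter (M.Adj v)).card :=
      Finset.card_nsmul_le_sum _ _ _
        (fun v hv => NEG A hAcard hAind v (Finset.mem_sdiff.mp hv).2)
    rw [Finset.card_sdiff_of_subset (Finset.subset_univ _), Finset.card_univ, hr, hAcard,
      smul_eq_mul] at h1
    calc (r - (n - 1)) * (s + 1) ≤ ∑ v ∈ Finset.univ \ A, (A.filter (M.Adj v)).card := h1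
      _ = ∑ x ∈ A, ((Finset.univ \ A).filter (M.Adj x)).card := dc _ _
      _ ≤ ∑ x ∈ A, (N x).card := Finset.sum_le_sum (fun x hx => Finset.card_le_card (by
            intro u hu
            rw [hNmem]
            exact (Finset.mem_filter.mp hu).2))
  have hex : ∃ c ∈ A, n - 1 ≤ (N c).card := by
    by_contra h
    push_neg at h
    have hup : ∑ x ∈ A, (N x).card ≤ A.card * (n - 2) :=
      Finset.sum_le_card_nsmul _ _ _ (fun x hx => by have := h x hx; omega)
    rw [hAcard] at hup
    have he : r - (n - 1) = (r - n) + 1 := by omega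
    rw [he, add_mul, one_mul] at hlow1
    have hfin := le_trans hlow1 hup
    linarith
  obtain ⟨c, hcA, hc⟩ := hex
  obtain ⟨B, hBsub, hBcard⟩ := Finset.exists_subset_card_eq (s := N c) (n := n - 1) hc
  have hBind : ∀ x ∈ B, ∀ y ∈ B, x ≠ y → ¬M.Adj x y := fun x hx y hy _ =>
    hNind c x (hBsub hx) y (hBsub hy)
  have hcB : c ∉ B := fun h => M.irrefl ((hNmem c c).mp (hBsub h))
  set W : Finset V := Finset.univ \ insert c B with hW
  have hWcard : W.card = r - n := by
    rw [hW, Finset.card_sdiff_of_subset (Finset.subset_univ _), Finset.card_univ, hr,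
      Finset.card_insert_of_notMem hcB, hBcard]
    omega
  have hlow : (r - n) * (s + 1) ≤ ∑ v ∈ W, (B.filter (M.Adj v)).card := by
    have h1 := Finset.card_nsmul_le_sum W (fun v => (B.filter (M.Adj v)).card) (s + 1)
      (fun v hv => NEG B hBcard hBind v
        (fun hb => (Finset.mem_sdiff.mp hv).2 (Finset.mem_insert_of_mem hb)))
    rwa [hWcard, smul_eq_mul] at h1
  have hup : ∑ x ∈ B, (W.filter (M.Adj x)).card ≤ (n - 1) * (n - 2) := by
    have hbd : ∀ x ∈ B, (W.filter (M.Adj x)).card ≤ n - 2 := by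
      intro x hx
      have hsub : W.filter (M.Adj x) ⊆ (N x).erase c := by
        intro u hu
        rw [Finset.mem_erase]
        obtain ⟨huW, hadj⟩ := Finset.mem_filter.mp hu
        refine ⟨?_, (hNmem x u).mpr hadj⟩
        intro he
        exact (Finset.mem_sdiff.mp huW).2 (he ▸ Finset.mem_insert_self c B)
      have hcNx : c ∈ N x := (hNmem x c).mpr (M.adj_symm ((hNmem c x).mp (hBsub hx)))
      have hle := Finset.card_le_card hsub
      rw [Finset.card_erase_of_mem hcNx] at hle
      have hd := hdeg x
      omega
    calc ∑ x ∈ B, (W.filter (M.Adj x)).card ≤ ∑ _x ∈ B, (n - 2) := Finset.sum_le_sum hbd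
      _ = (n - 1) * (n - 2) := by rw [Finset.sum_const, hBcard, smul_eq_mul]
  rw [dc W B] at hlow
  have hfin := le_trans hlow hup
  linarith
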